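/- Every nil-polynomial is uniquely determined by its quadratic and cubic terms: if P and P̃ are nil-polynomials on the same space W (arising from possibly different admissible algebras) with P^{[2]} = P̃^{[2]} and P^{[3]} = P̃^{[3]}, then P = P̃. -/

import Mathlib

open Finset

/-- Annihilator `Ann(N) = {u ∈ N : uN = 0}` of a non-unital commutative ℂ-algebra. -/
def annN (N : Type*) [NonUnitalCommRing N] [Module ℂ N] [IsScalarTower ℂ N N] :
    Submodule ℂ N where
  carrier := {u | ∀ v : N, u * v = 0}
  add_mem' := fun ha hb v => by rw [add_mul, ha v, hb v, add_zero]
  zero_mem' := fun v => zero_mul v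
  smul_mem' := fun c a ha v => by rw [smul_mul_assoc, ha v, smul_zero]

/-- The descending chain of ideals: `npow N j` is `N^j` for `j ≥ 1`
(`N^1 = N`, `N^{j+1} = span(N·N^j)`; `npow N 0 := ⊤` by convention). -/
def npow (N : Type*) [NonUnitalCommRing N] [Module ℂ N] : ℕ → Submodule ℂ N
  | 0 => ⊤
  | 1 => ⊤
  | (j+2) => Submodule.span ℂ {x : N | ∃ u : N, ∃ v ∈ npow N (j+1), x = u * v}

/-- Powers `u^m` of an element in a non-unital commutative ring
(`upow u 0 := 0` by convention; only `m ≥ 1` is used). -/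
def upow {N : Type*} [NonUnitalCommRing N] (u : N) : ℕ → N
  | 0 => 0
  | 1 => u
  | (m+2) => u * upow u (m+1)

set_option linter.unusedSectionVars false

section Aux
variable {N : Type*} [NonUnitalCommRing N] [Module ℂ N]

lemma upow_two (u : N) : upow u 2 = u * u := rfl
lemma upow_three (u : N) : upow u 3 = u * (u * u) := rfl
lemma upow_succ_succ (u : N) (m : ℕ) : upow u (m+2) = u * upow u (m+1) := rfl

lemma mul_mem_npow (u v : N) (j : ℕ) (hv : v ∈ npow N j) : u * v ∈ npow N (j+1) := by
  match j with
  | 0 => exact Submodule.mem_top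
  | (k+1) => exact Submodule.subset_span ⟨u, v, hv, rfl⟩

lemma upow_mem (u : N) (m : ℕ) : upow u (m+1) ∈ npow N (m+1) := by
  induction m with
  | zero => exact Submodule.mem_top
  | succ k ih => exact mul_mem_npow u _ _ ih

lemma upow_eq_zero {ν : ℕ} (hnil : npow N (ν+1) = ⊥) (u : N) :
    ∀ ℓ, ν + 1 ≤ ℓ → upow u ℓ = 0 := by
  have base : upow u (ν+1) = 0 := by
    have := upow_mem u ν
    rw [hnil] at this
    simpa using this
  intro ℓ hℓ
  obtain ⟨d, rfl⟩ : ∃ d, ℓ = (ν+1) + d := ⟨ℓ - (ν+1), by omega⟩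
  induction d with
  | zero => exact base
  | succ k ih =>
    have : (ν+1) + (k+1) = (ν + k) + 2 := by omega
    rw [this, upow_succ_succ]
    have : (ν + k) + 1 = (ν + 1) + k := by omega
    rw [this, ih (by omega)]
    exact mul_zero u

lemma exists_ann [SMulCommClass ℂ N N] [IsScalarTower ℂ N N]
    {ν : ℕ} (hnil : npow N (ν+1) = ⊥) (u : N) (h : ∃ v, u * v ≠ 0) :
    ∃ w, u * w ≠ 0 ∧ u * w ∈ annN N := by
  have main : ∀ k, k ≤ ν + 1 → ∀ v ∈ npow N (ν+1-k), u * v ≠ 0 →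
      ∃ w, u * w ≠ 0 ∧ u * w ∈ annN N := by
    intro k
    induction k with
    | zero =>
      intro _ v hv hne
      rw [Nat.sub_zero, hnil] at hv
      simp only [Submodule.mem_bot] at hv
      rw [hv, mul_zero] at hne
      exact absurd rfl hne
    | succ k ih =>
      intro hk v hv hne
      by_cases hA : u * v ∈ annN N
      · exact ⟨v, hne, hA⟩
      · have : ∃ z, (u * v) * z ≠ 0 := by
          by_contra hz
          push_neg at hz
          exact hA hz
        obtain ⟨z, hz⟩ := this
        refine ih (by omega) (v * z) ?_ ?_
        · rw [mul_comm v z]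
          have hmem := mul_mem_npow z v _ hv
          have harith : ν + 1 - (k+1) + 1 = ν + 1 - k := by omega
          rwa [harith] at hmem
        · rw [← mul_assoc]; exact hz
  obtain ⟨v, hv⟩ := h
  exact main (ν+1) le_rfl v (by rw [Nat.sub_self]; exact Submodule.mem_top) hv

lemma ann_span [IsScalarTower ℂ N N] (hann : Module.finrank ℂ (annN N) = 1) {a : N}
    (ha : a ∈ annN N) (ha0 : a ≠ 0) : ∀ u ∈ annN N, ∃ c : ℂ, u = c • a := by
  intro u hu
  obtain ⟨c, hc⟩ := (finrank_eq_one_iff_of_nonzero' (⟨a, ha⟩ : annN N)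
    (by simp [Subtype.ext_iff, ha0])).mp hann ⟨u, hu⟩
  exact ⟨c, by simpa [Subtype.ext_iff] using hc.symm⟩

end Aux

section Core
variable {W : Type*} [AddCommGroup W] [Module ℂ W]
variable {N : Type*} [NonUnitalCommRing N] [Module ℂ N] [SMulCommClass ℂ N N]
  [IsScalarTower ℂ N N]

/-- The core construction: the sequence of "powers" of `x` inside `W`, transported
through `φ`, together with nondegeneracy of the trace form. -/
lemma core (ν : ℕ) (hnil : npow N (ν + 1) = ⊥) (hann : Module.finrank ℂ (annN N) = 1)
    (ω : N →ₗ[ℂ] ℂ) (hω : ∃ a ∈ annN N, ω a ≠ 0)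
    (φ : W →ₗ[ℂ] N) (hinj : Function.Injective φ)
    (hrange : LinearMap.range φ = LinearMap.ker ω) :
    ∃ pw : W → ℕ → W,
      (∀ x, pw x 0 = x) ∧
      (∀ x m, φ x * φ (pw x m) = upow (φ x) (m+2)) ∧
      (∀ x m z, φ (pw x (m+1)) * φ z = φ x * (φ (pw x m) * φ z)) ∧
      (∀ x : W, (∀ y : W, ω (φ x * φ y) = 0) → x = 0) := by
  obtain ⟨a, haAnn, haω⟩ := hω
  have ha0 : a ≠ 0 := fun h => haω (by rw [h, map_zero])
  have hφker : ∀ x : W, ω (φ x) = 0 := by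
    intro x
    have : φ x ∈ LinearMap.ker ω := hrange ▸ LinearMap.mem_range_self φ x
    exact this
  have haz : ∀ v : N, v * a = 0 := fun v => by rw [mul_comm]; exact haAnn v
  have hex : ∀ x y : W, ∃ w : W, φ w = φ x * φ y - (ω (φ x * φ y) / ω a) • a := by
    intro x y
    have : φ x * φ y - (ω (φ x * φ y) / ω a) • a ∈ LinearMap.range φ := by
      rw [hrange, LinearMap.mem_ker, map_sub, map_smul, smul_eq_mul,
        div_mul_cancel₀ _ haω, sub_self]
    exact this
  choose mul hmul using hex
  refine ⟨fun x m => Nat.rec x (fun _ w => mul x w) m, fun x => rfl, ?_, ?_, ?_⟩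
  · intro x m
    induction m with
    | zero =>
      show φ x * φ x = upow (φ x) 2
      rw [upow_two]
    | succ k ih =>
      show φ x * φ (mul x (Nat.rec x (fun _ w => mul x w) k)) = upow (φ x) (k+3)
      rw [hmul, mul_sub, mul_smul_comm, haz, smul_zero, sub_zero, ih]
      rfl
  · intro x m z
    show φ (mul x (Nat.rec x (fun _ w => mul x w) m)) * φ z = _
    rw [hmul, sub_mul, smul_mul_assoc, haAnn, smul_zero, sub_zero, mul_assoc]
  · intro x hx
    have step1 : ∀ v : N, ω (φ x * v) = 0 := by
      intro v
      have hv : v - (ω v / ω a) • a ∈ LinearMap.range φ := by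
        rw [hrange, LinearMap.mem_ker, map_sub, map_smul, smul_eq_mul,
          div_mul_cancel₀ _ haω, sub_self]
      obtain ⟨y, hy⟩ := hv
      have : φ x * v = φ x * φ y := by
        rw [hy, mul_sub, mul_smul_comm, haz, smul_zero, sub_zero]
      rw [this, hx y]
    have step2 : φ x ∈ annN N := by
      by_contra hA
      have : ∃ v, φ x * v ≠ 0 := by
        by_contra hz
        push_neg at hz
        exact hA hz
      obtain ⟨w, hw, hwAnn⟩ := exists_ann hnil (φ x) this
      obtain ⟨c, hc⟩ := ann_span hann haAnn ha0 _ hwAnn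
      have : ω (φ x * w) = c * ω a := by rw [hc, map_smul, smul_eq_mul]
      rw [step1 w] at this
      have hc0 : c = 0 := by
        field_simp at this
        exact (mul_eq_zero.mp this.symm).resolve_right haω
      rw [hc0, zero_smul] at hc
      exact hw hc
    obtain ⟨c, hc⟩ := ann_span hann haAnn ha0 _ step2
    have : ω (φ x) = c * ω a := by rw [hc, map_smul, smul_eq_mul]
    rw [hφker x] at this
    have hc0 : c = 0 := by
      field_simp at this
      exact (mul_eq_zero.mp this.symm).resolve_right haω
    rw [hc0, zero_smul] at hc
    exact hinj (by rw [hc, map_zero])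
end Core

section Pol
variable {W : Type*} [AddCommGroup W] [Module ℂ W]
variable {N : Type*} [NonUnitalCommRing N] [Module ℂ N] [SMulCommClass ℂ N N]
  [IsScalarTower ℂ N N]
variable (ω : N →ₗ[ℂ] ℂ) (φ : W →ₗ[ℂ] N)

lemma Bpol (x y : W) : 2 * ω (φ x * φ y)
    = ω (φ (x+y) * φ (x+y)) - ω (φ x * φ x) - ω (φ y * φ y) := by
  have e : φ (x+y) * φ (x+y) = φ x * φ x + (φ x * φ y + (φ x * φ y + φ y * φ y)) := by
    rw [map_add, add_mul, mul_add, mul_add, mul_comm (φ y) (φ x)]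
    abel
  rw [e]
  simp only [map_add]
  ring

lemma cube_add (s t : N) : (s+t)*((s+t)*(s+t))
    = s*(s*s) + (s*(s*t) + s*(s*t) + s*(s*t)) + (s*(t*t) + s*(t*t) + s*(t*t)) + t*(t*t) := by
  simp only [mul_add, add_mul, mul_left_comm, mul_comm]
  abel

lemma Dpol (x y : W) : 6 * ω (φ x * (φ x * φ y))
    = ω (φ (x+y) * (φ (x+y) * φ (x+y))) - ω (φ (x-y) * (φ (x-y) * φ (x-y)))
      - 2 * ω (φ y * (φ y * φ y)) := by
  have e1 := congrArg ω (cube_add (φ x) (φ y))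
  have e2 := congrArg ω (cube_add (φ x) (-(φ y)))
  simp only [mul_neg, neg_mul, neg_neg, map_add, map_neg] at e1 e2
  rw [map_add, map_sub] at *
  rw [show φ x - φ y = φ x + -(φ y) from sub_eq_add_neg _ _]
  linear_combination e2 - e1

lemma Tpol (x y z : W) : 2 * ω (φ x * (φ y * φ z))
    = ω (φ (x+y) * (φ (x+y) * φ z)) - ω (φ x * (φ x * φ z)) - ω (φ y * (φ y * φ z)) := by
  have e : (φ x + φ y)*((φ x + φ y)*φ z)
      = φ x*(φ x*φ z) + (φ x*(φ y*φ z) + φ x*(φ y*φ z)) + φ y*(φ y*φ z) := by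
    simp only [mul_add, add_mul, mul_left_comm, mul_comm]
    abel
  rw [map_add, e]
  simp only [map_add]
  ring
end Pol

/-- A nil-polynomial is uniquely determined by its quadratic and cubic
terms: if `P = ω ∘ exp₂ ∘ φ` and `P̃ = ω̃ ∘ exp₂ ∘ φ̃` are nil-polynomials on the same
space `W` (arising from possibly different admissible algebras) with `P^{[2]} = P̃^{[2]}`
and `P^{[3]} = P̃^{[3]}`, then `P = P̃`. Here `P(x) = Σ_{ℓ=2}^{ν} ω(φ(x)^ℓ)/ℓ!`. -/
theorem stmt13 (W : Type*) [AddCommGroup W] [Module ℂ W] [FiniteDimensional ℂ W]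
    (N : Type*) [NonUnitalCommRing N] [Module ℂ N] [SMulCommClass ℂ N N]
    [IsScalarTower ℂ N N] [FiniteDimensional ℂ N]
    (ν : ℕ) (hnil : npow N (ν + 1) = ⊥) (hann : Module.finrank ℂ (annN N) = 1)
    (ω : N →ₗ[ℂ] ℂ) (hω : ∃ a ∈ annN N, ω a ≠ 0)
    (φ : W →ₗ[ℂ] N) (hinj : Function.Injective φ)
    (hrange : LinearMap.range φ = LinearMap.ker ω)
    (N' : Type*) [NonUnitalCommRing N'] [Module ℂ N'] [SMulCommClass ℂ N' N']
    [IsScalarTower ℂ N' N'] [FiniteDimensional ℂ N']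
    (ν' : ℕ) (hnil' : npow N' (ν' + 1) = ⊥) (hann' : Module.finrank ℂ (annN N') = 1)
    (ω' : N' →ₗ[ℂ] ℂ) (hω' : ∃ a ∈ annN N', ω' a ≠ 0)
    (φ' : W →ₗ[ℂ] N') (hinj' : Function.Injective φ')
    (hrange' : LinearMap.range φ' = LinearMap.ker ω')
    (h2 : ∀ x : W, ω (upow (φ x) 2) = ω' (upow (φ' x) 2))
    (h3 : ∀ x : W, ω (upow (φ x) 3) = ω' (upow (φ' x) 3)) :
    ∀ x : W,
      ∑ ℓ ∈ Finset.Icc 2 ν, ((Nat.factorial ℓ : ℂ))⁻¹ * ω (upow (φ x) ℓ)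
        = ∑ ℓ ∈ Finset.Icc 2 ν', ((Nat.factorial ℓ : ℂ))⁻¹ * ω' (upow (φ' x) ℓ) := by
  -- quadratic and cubic forms agree
  have hQ : ∀ x : W, ω (φ x * φ x) = ω' (φ' x * φ' x) := by
    intro x
    have := h2 x
    rwa [upow_two, upow_two] at this
  have hC : ∀ x : W, ω (φ x * (φ x * φ x)) = ω' (φ' x * (φ' x * φ' x)) := by
    intro x
    have := h3 x
    rwa [upow_three, upow_three] at this
  have Beq : ∀ x y : W, ω (φ x * φ y) = ω' (φ' x * φ' y) := by
    intro x y
    linear_combination (Bpol ω φ x y - Bpol ω' φ' x y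
      + hQ (x+y) - hQ x - hQ y) / 2
  have Deq : ∀ x y : W, ω (φ x * (φ x * φ y)) = ω' (φ' x * (φ' x * φ' y)) := by
    intro x y
    linear_combination (Dpol ω φ x y - Dpol ω' φ' x y
      + hC (x+y) - hC (x-y) - 2 * hC y) / 6
  have Teq : ∀ x y z : W, ω (φ x * (φ y * φ z)) = ω' (φ' x * (φ' y * φ' z)) := by
    intro x y z
    linear_combination (Tpol ω φ x y z - Tpol ω' φ' x y z
      + Deq (x+y) z - Deq x z - Deq y z) / 2
  obtain ⟨pw, hpw0, hpwmul, hpwstep, hnd⟩ := core ν hnil hann ω hω φ hinj hrange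
  obtain ⟨pw', hpw0', hpwmul', hpwstep', _⟩ := core ν' hnil' hann' ω' hω' φ' hinj' hrange'
  have hpweq : ∀ (x : W) (m : ℕ), pw x m = pw' x m := by
    intro x m
    induction m with
    | zero => rw [hpw0, hpw0']
    | succ k ih =>
      have key : ∀ z : W, ω (φ (pw x (k+1)) * φ z) = ω (φ (pw' x (k+1)) * φ z) := by
        intro z
        rw [Beq (pw' x (k+1)) z, hpwstep x k z, ih, Teq x (pw' x k) z, ← hpwstep' x k z]
      have hz : ∀ z : W, ω (φ (pw x (k+1) - pw' x (k+1)) * φ z) = 0 := by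
        intro z
        rw [map_sub, sub_mul, map_sub, key z, sub_self]
      exact sub_eq_zero.mp (hnd _ hz)
  have hterm : ∀ (x : W) (ℓ : ℕ), 2 ≤ ℓ → ω (upow (φ x) ℓ) = ω' (upow (φ' x) ℓ) := by
    intro x ℓ hℓ
    obtain ⟨m, rfl⟩ : ∃ m, ℓ = m + 2 := ⟨ℓ - 2, by omega⟩
    rw [← hpwmul x m, ← hpwmul' x m, hpweq x m]
    exact Beq x (pw' x m)
  intro x
  have hL : ∑ ℓ ∈ Finset.Icc 2 ν, ((Nat.factorial ℓ : ℂ))⁻¹ * ω (upow (φ x) ℓ)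
      = ∑ ℓ ∈ Finset.Icc 2 (max ν ν'), ((Nat.factorial ℓ : ℂ))⁻¹ * ω (upow (φ x) ℓ) := by
    refine Finset.sum_subset (Finset.Icc_subset_Icc_right (le_max_left ν ν')) ?_
    intro i hi hni
    have : ν + 1 ≤ i := by
      simp only [Finset.mem_Icc] at hi hni
      omega
    rw [upow_eq_zero hnil _ i this, map_zero, mul_zero]
  have hR : ∑ ℓ ∈ Finset.Icc 2 ν', ((Nat.factorial ℓ : ℂ))⁻¹ * ω' (upow (φ' x) ℓ)
      = ∑ ℓ ∈ Finset.Icc 2 (max ν ν'), ((Nat.factorial ℓ : ℂ))⁻¹ * ω' (upow (φ' x) ℓ) := by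
    refine Finset.sum_subset (Finset.Icc_subset_Icc_right (le_max_right ν ν')) ?_
    intro i hi hni
    have : ν' + 1 ≤ i := by
      simp only [Finset.mem_Icc] at hi hni
      omega
    rw [upow_eq_zero hnil' _ i this, map_zero, mul_zero]
  rw [hL, hR]
  refine Finset.sum_congr rfl ?_
  intro ℓ hℓ
  rw [hterm x ℓ (Finset.mem_Icc.mp hℓ).1]
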